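/- Under the run invariant, if z = 0, c_j = c_i and l_j > l_i, then c_j ≠ c_{i+1}, and: either c_j < c_{i+1} and c_k^{l_k} ⋯ c_{j-1}^{l_{j-1}} c_j^{l_j} ∉ P', or c_j > c_{i+1} and c_k^{l_k} ⋯ c_{j-1}^{l_{j-1}} c_j^{l_j} ∈ L' (in which case its longest border is empty, so the invariant holds for j+1 with ℓ' = 0). -/

import Mathlib

variable {α : Type*}

/-- The rotation `rot(w,i) = w[i..|w|-1] w[0..i-1]`. -/
def rot (w : List α) (i : ℕ) : List α := w.drop i ++ w.take i

/-- A Lyndon word: a nonempty word strictly smaller than all of its proper rotations. -/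
def IsLyndon [LinearOrder α] (w : List α) : Prop :=
  w ≠ [] ∧ ∀ i, 0 < i → i < w.length → w < rot w i

/-- `IsCFL w f` : `f` is the Chen–Fox–Lyndon factorization of `w`, i.e. a
nonincreasing sequence of Lyndon words whose concatenation is `w`. -/
def IsCFL [LinearOrder α] (w : List α) (f : List (List α)) : Prop :=
  f.flatten = w ∧ (∀ x ∈ f, IsLyndon x) ∧ f.Chain' (· ≥ ·)

/-- `u^k` : the `k`-fold concatenation of the word `u`. -/
def listPow (u : List α) (k : ℕ) : List α := (List.replicate k u).flatten

/-- `P`: the set of nonempty prefixes of Lyndon words. -/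
def InP [LinearOrder α] (w : List α) : Prop :=
  w ≠ [] ∧ ∃ u : List α, IsLyndon (w ++ u)

/-- `P' = P ∪ { c^k : k ≥ 2 }` where `c` is the maximum symbol of the alphabet. -/
def InP' [LinearOrder α] (w : List α) : Prop :=
  InP w ∨ ∃ (c : α) (k : ℕ), 2 ≤ k ∧ (∀ a : α, a ≤ c) ∧ w = List.replicate k c

/-- A border of `w`: a proper prefix of `w` that is also a suffix of `w`. -/
def IsBorder (b w : List α) : Prop := b <+: w ∧ b <:+ w ∧ b.length < w.length

/-- The length of the longest common prefix of two words. -/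
def lcpLen [DecidableEq α] : List α → List α → ℕ
  | a :: u, b :: v => if a = b then lcpLen u v + 1 else 0
  | _, _ => 0


/-- The number of runs in the run-length encoding of a word: the length of the
list obtained by collapsing consecutive equal symbols. -/
def numRuns [DecidableEq α] (w : List α) : ℕ := (w.destutter (· ≠ ·)).length

/-- An LR word: either a Lyndon word or a power `a^k` (`k ≥ 2`) of a single symbol. -/
def IsLR [LinearOrder α] (w : List α) : Prop :=
  IsLyndon w ∨ ∃ (a : α) (k : ℕ), 2 ≤ k ∧ w = List.replicate k a

/-- The word `c_k^{l_k} c_{k+1}^{l_{k+1}} ⋯ c_{j-1}^{l_{j-1}}` determined by the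
runs `(c_t, l_t)` for `k ≤ t < j`. -/
def runWord (c : ℕ → α) (l : ℕ → ℕ) (k j : ℕ) : List α :=
  ((List.range (j - k)).map (fun t => List.replicate (l (k + t)) (c (k + t)))).flatten



/-- Strict mismatch: `x` is smaller than `y` at the first difference, which exists. -/
def Mlt [LinearOrder α] (x y : List α) : Prop :=
  ∃ (p : List α) (a b : α) (x' y' : List α), a < b ∧ x = p ++ a :: x' ∧ y = p ++ b :: y'

section Mlt
variable [LinearOrder α]

theorem mlt_lex {x y : List α} (h : Mlt x y) : List.Lex (·<·) x y := by
  obtain ⟨p, a, b, x', y', hab, rfl, rfl⟩ := h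
  induction p with
  | nil => exact List.Lex.rel hab
  | cons c p ih => exact List.Lex.cons ih

theorem Mlt.lt {x y : List α} (h : Mlt x y) : x < y := mlt_lex h

theorem lex_cases {x y : List α} (h : List.Lex (·<·) x y) :
    Mlt x y ∨ (x <+: y ∧ x ≠ y) := by
  induction h with
  | @nil b' l' => exact Or.inr ⟨⟨_, rfl⟩, by simp⟩
  | @rel a1 x1 b1 y1 hab => exact Or.inl ⟨[], a1, b1, x1, y1, hab, rfl, rfl⟩
  | @cons a1 x1 y1 h1 ih =>
      rcases ih with ⟨p, u, v, x'', y'', huv, rfl, rfl⟩ | ⟨hpre, hne⟩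
      · exact Or.inl ⟨a1 :: p, u, v, x'', y'', huv, rfl, rfl⟩
      · exact Or.inr ⟨⟨hpre.choose, by rw [List.cons_append, hpre.choose_spec]⟩,
          by simpa using hne⟩

theorem mlt_of_lt_of_length_le {x y : List α} (h : x < y) (hl : y.length ≤ x.length) :
    Mlt x y := by
  rcases lex_cases h with h' | ⟨hpre, hne⟩
  · exact h'
  · exact absurd (hpre.eq_of_length (le_antisymm hpre.length_le hl)) hne

theorem mlt_asymm {x y : List α} (h : Mlt x y) (h' : Mlt y x) : False :=
  lt_asymm h.lt h'.lt

end Mlt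

/-- locate the mismatch char inside the left part of an append. -/
theorem locate_left {X Y p y' : List α} {a : α} (h : X ++ Y = p ++ a :: y')
    (hl : p.length < X.length) : ∃ x2, X = p ++ a :: x2 := by
  obtain ⟨d, hd⟩ : ∃ d, X.length - p.length = d + 1 :=
    ⟨X.length - p.length - 1, by omega⟩
  refine ⟨y'.take d, ?_⟩
  have h1 : X = (p ++ a :: y').take X.length := by
    rw [← h, List.take_left]
  rw [List.take_append, List.take_of_length_le (le_of_lt hl), hd] at h1
  simpa using h1

/-- the mismatch is past the left part of an append. -/
theorem locate_right {X Y p y' : List α} {a : α} (h : X ++ Y = p ++ a :: y')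
    (hl : X.length ≤ p.length) : ∃ p1, p = X ++ p1 ∧ Y = p1 ++ a :: y' := by
  refine ⟨p.drop X.length, ?_, ?_⟩
  · have h1 : X = (p ++ a :: y').take X.length := by rw [← h, List.take_left]
    rw [List.take_append, Nat.sub_eq_zero_of_le hl, List.take_zero,
      List.append_nil] at h1
    conv_lhs => rw [← List.take_append_drop X.length p, ← h1]
  · have h2 := congrArg (List.drop X.length) h
    rw [List.drop_left, List.drop_append,
      Nat.sub_eq_zero_of_le hl, List.drop_zero] at h2
    exact h2

/-- two decompositions with the same prefix length give equal mismatch data. -/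
theorem append_cons_inj {p x' y' : List α} {a b : α}
    (h : p ++ a :: x' = p ++ b :: y') : a = b ∧ x' = y' := by
  have := List.append_cancel_left h
  exact ⟨by injection this, by injection this⟩


section Lyndon
variable [LinearOrder α]

theorem mlt_append {x y z z2 : List α} (h : Mlt x y) : Mlt (x ++ z) (y ++ z2) := by
  obtain ⟨p, a, b, x', y', hab, rfl, rfl⟩ := h
  exact ⟨p, a, b, x' ++ z, y' ++ z2, hab, by simp, by simp⟩

theorem mlt_append_left {x y : List α} (s : List α) (h : Mlt x y) :
    Mlt (s ++ x) (s ++ y) := by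
  obtain ⟨p, a, b, x', y', hab, rfl, rfl⟩ := h
  exact ⟨s ++ p, a, b, x', y', hab, by simp, by simp⟩

theorem mlt_append_left_cancel {s x y : List α} (h : Mlt (s ++ x) (s ++ y)) : Mlt x y := by
  obtain ⟨p, a, b, x', y', hab, hx, hy⟩ := h
  rcases lt_or_ge p.length s.length with hl | hl
  · obtain ⟨x2, hx2⟩ := locate_left hx hl
    obtain ⟨y2, hy2⟩ := locate_left hy hl
    have : a = b := by
      have := hx2.symm.trans hy2
      exact (append_cons_inj this).1
    exact absurd this (ne_of_lt hab)
  · obtain ⟨p1, hp1, hx1⟩ := locate_right hx hl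
    obtain ⟨p1', hp1', hy1⟩ := locate_right hy hl
    have hpp : p1 = p1' := List.append_cancel_left (hp1.symm.trans hp1')
    exact ⟨p1, a, b, x', y', hab, hx1, hpp ▸ hy1⟩

theorem mlt_left_of_eq_length {x y z z2 : List α} (h : Mlt (x ++ z) (y ++ z2))
    (hl : x.length = y.length) : Mlt x y ∨ x = y := by
  obtain ⟨p, a, b, x', y', hab, hx, hy⟩ := h
  rcases lt_or_ge p.length x.length with h1 | h1
  · obtain ⟨x2, hx2⟩ := locate_left hx h1
    obtain ⟨y2, hy2⟩ := locate_left hy (hl ▸ h1)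
    exact Or.inl ⟨p, a, b, x2, y2, hab, hx2, hy2⟩
  · right
    have e1 : x = (p ++ a :: x').take x.length := by rw [← hx, List.take_left]
    have e2 : y = (p ++ b :: y').take y.length := by rw [← hy, List.take_left]
    rw [List.take_append, Nat.sub_eq_zero_of_le h1] at e1
    rw [List.take_append, Nat.sub_eq_zero_of_le (hl ▸ h1)] at e2
    simp only [List.take_zero, List.append_nil] at e1 e2
    rw [e1, e2, hl]

theorem mlt_rot {v : List α} (hv : IsLyndon v) {p : ℕ} (h0 : 0 < p) (hp : p < v.length) :
    Mlt v (v.drop p ++ v.take p) := by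
  have h := hv.2 p h0 hp
  exact mlt_of_lt_of_length_le h (by simp [rot]; omega)

theorem lyndon_border_eq_nil {v s : List α} (hv : IsLyndon v) (hpre : s <+: v)
    (hsuf : s <:+ v) (hlen : s.length < v.length) : s = [] := by
  by_contra hne
  have hs0 : 0 < s.length := List.length_pos_iff.2 hne
  obtain ⟨t, ht⟩ := hpre
  obtain ⟨q, hq⟩ := hsuf
  have hqlen : q.length = v.length - s.length := by
    have := congrArg List.length hq; simp at this; omega
  have htlen : t.length = v.length - s.length := by
    have := congrArg List.length ht; simp at this; omega
  have hdrop1 : v.drop q.length = s := by rw [← hq, List.drop_left]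
  have htake1 : v.take q.length = q := by rw [← hq, List.take_left]
  have hdrop2 : v.drop s.length = t := by rw [← ht, List.drop_left]
  have htake2 : v.take s.length = s := by rw [← ht, List.take_left]
  have m1 : Mlt (s ++ t) (s ++ q) := by
    have h := mlt_rot hv (p := q.length) (by omega) (by omega)
    rw [hdrop1, htake1, ← ht] at h
    exact h
  have m2 : Mlt (q ++ s) (t ++ s) := by
    have h := mlt_rot hv (p := s.length) hs0 hlen
    rw [hdrop2, htake2, ← hq] at h
    exact h
  have m1' : Mlt t q := mlt_append_left_cancel m1
  rcases mlt_left_of_eq_length m2 (by omega) with m2' | heq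
  · exact mlt_asymm m1' m2'
  · rw [heq] at m1'; exact lt_irrefl _ m1'.lt

theorem lyndon_mlt_drop {v : List α} (hv : IsLyndon v) {p : ℕ} (h0 : 0 < p)
    (hp : p < v.length) : Mlt v (v.drop p) := by
  obtain ⟨p0, a, b, x', y', hab, hx, hy⟩ := mlt_rot hv h0 hp
  rcases lt_or_ge p0.length (v.drop p).length with hl | hl
  · obtain ⟨x2, hx2⟩ := locate_left hy hl
    exact ⟨p0, a, b, x', x2, hab, hx, hx2⟩
  · obtain ⟨p1, hp1, _⟩ := locate_right hy hl
    have hv2 : p0 ++ a :: x' = v.drop p ++ (p1 ++ a :: x') := by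
      rw [hp1, List.append_assoc]
    have hpref : v.drop p <+: v := ⟨p1 ++ a :: x', by rw [← hv2, ← hx]⟩
    have hnil := lyndon_border_eq_nil hv hpref (List.drop_suffix p v)
      (by rw [List.length_drop]; omega)
    have := congrArg List.length hnil
    rw [List.length_drop] at this; simp at this; omega

theorem lyndon_of_mlt_drops {v : List α} (hne : v ≠ [])
    (h : ∀ p, 0 < p → p < v.length → Mlt v (v.drop p)) : IsLyndon v := by
  refine ⟨hne, fun p h0 hp => ?_⟩
  have h2 := mlt_append (z := ([] : List α)) (z2 := v.take p) (h p h0 hp)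
  rw [List.append_nil] at h2
  exact h2.lt

theorem mlt_head_le {a b : α} {x0 y0 : List α} (h : Mlt (a :: x0) (b :: y0)) : a ≤ b := by
  obtain ⟨p, a', b', x', y', hab, hx, hy⟩ := h
  cases p with
  | nil =>
      simp only [List.nil_append, List.cons.injEq] at hx hy
      rw [hx.1, hy.1]; exact le_of_lt hab
  | cons c p =>
      simp only [List.cons_append, List.cons.injEq] at hx hy
      rw [hx.1, hy.1]

theorem lyndon_append_singleton {c0 : α} {u0 : List α} {a : α}
    (hu : IsLyndon (c0 :: u0)) (ha : c0 < a) : IsLyndon ((c0 :: u0) ++ [a]) := by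
  apply lyndon_of_mlt_drops (by simp)
  intro p h0 hp
  rcases lt_or_ge p (c0 :: u0).length with hpu | hpu
  · rw [List.drop_append, Nat.sub_eq_zero_of_le (le_of_lt hpu),
      List.drop_zero]
    exact mlt_append (lyndon_mlt_drop hu h0 hpu)
  · have hpe : p = (c0 :: u0).length := by
      rw [List.length_append, List.length_singleton] at hp; omega
    rw [hpe, List.drop_left]
    exact ⟨[], c0, a, u0 ++ [a], [], ha, rfl, rfl⟩

theorem lyndon_append_replicate {c0 : α} {u0 : List α} {a : α}
    (hu : IsLyndon (c0 :: u0)) (ha : c0 < a) (r : ℕ) :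
    IsLyndon ((c0 :: u0) ++ List.replicate r a) := by
  induction r with
  | zero => simpa using hu
  | succ n ih =>
      have : (c0 :: u0) ++ List.replicate (n + 1) a
          = (c0 :: (u0 ++ List.replicate n a)) ++ [a] := by
        rw [List.replicate_succ']; simp
      rw [this]
      exact lyndon_append_singleton (by simpa using ih) ha

end Lyndon

/-! ### runWord and run-structure lemmas -/


section RunWord
variable (c : ℕ → α) (l : ℕ → ℕ)

theorem runWord_nil {k j : ℕ} (h : j ≤ k) : runWord c l k j = [] := by
  unfold runWord
  rw [Nat.sub_eq_zero_of_le h]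
  simp

theorem runWord_succ {k j : ℕ} (h : k ≤ j) :
    runWord c l k (j + 1) = runWord c l k j ++ List.replicate (l j) (c j) := by
  unfold runWord
  rw [show j + 1 - k = (j - k) + 1 by omega, List.range_succ, List.map_append,
    List.flatten_append]
  simp only [List.map_cons, List.map_nil, List.flatten_cons, List.flatten_nil,
    List.append_nil]
  rw [show k + (j - k) = j by omega]

theorem runWord_cons {k j : ℕ} (h : k < j) :
    runWord c l k j = List.replicate (l k) (c k) ++ runWord c l (k + 1) j := by
  unfold runWord
  rw [show j - k = (j - (k + 1)) + 1 by omega, List.range_succ_eq_map, List.map_cons,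
    List.flatten_cons, List.map_map]
  have hmap : List.map ((fun t => List.replicate (l (k + t)) (c (k + t))) ∘ Nat.succ)
      (List.range (j - (k + 1)))
      = List.map (fun t => List.replicate (l (k + 1 + t)) (c (k + 1 + t)))
        (List.range (j - (k + 1))) := by
    apply List.map_congr_left
    intro t _
    simp only [Function.comp_apply]
    rw [show k + Nat.succ t = k + 1 + t by omega]
  rw [hmap]
  simp

theorem runWord_append {k t j : ℕ} (h1 : k ≤ t) (h2 : t ≤ j) :
    runWord c l k j = runWord c l k t ++ runWord c l t j := by
  induction j, h2 using Nat.le_induction with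
  | base => rw [runWord_nil c l (le_refl t), List.append_nil]
  | succ j htj ih =>
      rw [runWord_succ c l (h1.trans htj), runWord_succ c l htj, ih, List.append_assoc]

theorem runWord_ne_nil {k j : ℕ} (h : k < j) (hl : 1 ≤ l k) : runWord c l k j ≠ [] := by
  rw [runWord_cons c l h]
  simp only [ne_eq, List.append_eq_nil_iff, not_and]
  intro hrep
  have := congrArg List.length hrep
  simp at this
  omega

theorem runWord_getLast? {k j : ℕ} (h : k < j) (hl : 1 ≤ l (j - 1)) :
    (runWord c l k j).getLast? = some (c (j - 1)) := by
  have hj : j = (j - 1) + 1 := by omega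
  rw [hj, runWord_succ c l (by omega), List.getLast?_append, List.getLast?_replicate]
  rw [if_neg (by omega)]
  rfl

theorem rep_runWord_getLast? {t j : ℕ} {m : ℕ} (h : t < j) (hm : 1 ≤ m)
    (hl : 1 ≤ l (j - 1)) :
    (List.replicate m (c t) ++ runWord c l (t + 1) j).getLast? = some (c (j - 1)) := by
  rcases eq_or_lt_of_le (Nat.succ_le_of_lt h) with he | hlt
  · subst he
    rw [runWord_nil c l (le_refl (t + 1)), List.append_nil, List.getLast?_replicate,
      if_neg (by omega)]
    simp
  · rw [List.getLast?_append, runWord_getLast? c l hlt hl]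
    rfl

end RunWord

section NumRuns
variable [DecidableEq α]

theorem destutter'_replicate_append (a : α) (m : ℕ) (x : List α) :
    List.destutter' (· ≠ ·) a (List.replicate m a ++ x) = List.destutter' (· ≠ ·) a x := by
  induction m with
  | zero => simp
  | succ n ih =>
      rw [List.replicate_succ, List.cons_append, List.destutter'_cons_neg _ (by simp)]
      exact ih

theorem numRuns_nil : numRuns ([] : List α) = 0 := rfl

theorem numRuns_eq_zero {x : List α} (h : numRuns x = 0) : x = [] := by
  cases x with
  | nil => rfl
  | cons a t =>
      unfold numRuns at h
      rw [List.destutter_cons'] at h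
      have : (List.destutter' (· ≠ ·) a t) ≠ [] := List.destutter'_ne_nil t (· ≠ ·)
      simp [List.length_eq_zero_iff] at h
      exact absurd h this

theorem numRuns_replicate_append {a : α} {m : ℕ} (hm : 1 ≤ m) (x : List α)
    (hx : ∀ b x', x = b :: x' → b ≠ a) :
    numRuns (List.replicate m a ++ x) = 1 + numRuns x := by
  obtain ⟨n, rfl⟩ : ∃ n, m = n + 1 := ⟨m - 1, by omega⟩
  rw [List.replicate_succ, List.cons_append]
  unfold numRuns
  rw [List.destutter_cons', destutter'_replicate_append]
  cases x with
  | nil => simp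
  | cons b x' =>
      rw [List.destutter'_cons_pos _ (by simpa using (hx b x' rfl).symm), List.destutter_cons']
      simp [Nat.add_comm]

theorem numRuns_replicate {a : α} {m : ℕ} (hm : 1 ≤ m) :
    numRuns (List.replicate m a) = 1 := by
  have := numRuns_replicate_append (a := a) hm [] (by simp)
  simpa [numRuns_nil] using this

omit [DecidableEq α] in
theorem replicate_append_cons {a : α} {m : ℕ} (hm : 1 ≤ m) (x : List α) :
    ∃ x', List.replicate m a ++ x = a :: x' := by
  obtain ⟨n, rfl⟩ : ∃ n, m = n + 1 := ⟨m - 1, by omega⟩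
  exact ⟨List.replicate n a ++ x, by rw [List.replicate_succ, List.cons_append]⟩

theorem numRuns_rep_runWord (c : ℕ → α) (l : ℕ → ℕ) :
    ∀ e t m, 1 ≤ m → (∀ u, t ≤ u → u ≤ t + e → 1 ≤ l u) →
    (∀ u, t ≤ u → u + 1 ≤ t + e → c u ≠ c (u + 1)) →
    numRuns (List.replicate m (c t) ++ runWord c l (t + 1) (t + 1 + e)) = e + 1 := by
  intro e
  induction e with
  | zero =>
      intro t m hm _ _
      rw [runWord_nil c l (le_refl (t + 1)), List.append_nil, numRuns_replicate hm]
  | succ e ih =>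
      intro t m hm hl hc
      have h1 : 1 ≤ l (t + 1) := hl (t + 1) (by omega) (by omega)
      rw [runWord_cons c l (by omega)]
      obtain ⟨x', hx'⟩ := replicate_append_cons (a := c (t + 1)) h1
        (runWord c l (t + 1 + 1) (t + 1 + (e + 1)))
      rw [numRuns_replicate_append hm _ ?_]
      · have hih := ih (t + 1) (l (t + 1)) h1
          (fun u hu1 hu2 => hl u (by omega) (by omega))
          (fun u hu1 hu2 => hc u (by omega) (by omega))
        rw [show t + 1 + 1 + e = t + 1 + (e + 1) by omega] at hih
        rw [hih]
        omega
      · intro b x'' hb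
        rw [hx'] at hb
        injection hb with hb1 _
        rw [← hb1]
        exact (hc t (le_refl t) (by omega)).symm

end NumRuns

/-! ### prefix/suffix structure lemmas -/

theorem prefix_append_cases {p X Y : List α} (h : p <+: X ++ Y)
    (hl : p.length ≤ X.length) : p <+: X := by
  obtain ⟨t, ht⟩ := h
  have : p = (X ++ Y).take p.length := by
    rw [← ht, List.take_append, List.take_length, Nat.sub_self,
      List.take_zero, List.append_nil]
  rw [this, List.take_append, Nat.sub_eq_zero_of_le hl, List.take_zero,
    List.append_nil]
  exact List.take_prefix _ _

theorem prefix_append_split {p X Y : List α} (h : p <+: X ++ Y)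
    (hl : X.length ≤ p.length) : ∃ p', p = X ++ p' ∧ p' <+: Y := by
  obtain ⟨t, ht⟩ := h
  refine ⟨p.drop X.length, ?_, ⟨t, ?_⟩⟩
  · have h1 : (p ++ t).take X.length = X := by rw [ht, List.take_left]
    rw [List.take_append, Nat.sub_eq_zero_of_le hl, List.take_zero,
      List.append_nil] at h1
    conv_lhs => rw [← List.take_append_drop X.length p, h1]
  · have h2 : (p ++ t).drop X.length = Y := by rw [ht, List.drop_left]
    rw [List.drop_append, Nat.sub_eq_zero_of_le hl, List.drop_zero] at h2
    exact h2

theorem suffix_append_cases {s X Y : List α} (h : s <:+ X ++ Y)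
    (hl : s.length ≤ Y.length) : s <:+ Y := by
  obtain ⟨t, ht⟩ := h
  have hlen : t.length + s.length = X.length + Y.length := by
    have := congrArg List.length ht; simp at this; omega
  refine ⟨t.drop X.length, ?_⟩
  have h2 : (t ++ s).drop X.length = Y := by rw [ht, List.drop_left]
  rw [List.drop_append, Nat.sub_eq_zero_of_le (by omega),
    List.drop_zero] at h2
  exact h2

theorem suffix_append_split {s X Y : List α} (h : s <:+ X ++ Y)
    (hl : Y.length ≤ s.length) : ∃ s', s = s' ++ Y ∧ s' <:+ X := by
  obtain ⟨t, ht⟩ := h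
  have hlen : t.length + s.length = X.length + Y.length := by
    have := congrArg List.length ht; simp at this; omega
  have h1 : s = (t ++ s).drop t.length := by rw [List.drop_left]
  rw [ht, List.drop_append, Nat.sub_eq_zero_of_le (by omega),
    List.drop_zero] at h1
  exact ⟨X.drop t.length, h1, List.drop_suffix _ _⟩

theorem prefix_replicate {p : List α} {n : ℕ} {a : α} (h : p <+: List.replicate n a) :
    p = List.replicate p.length a :=
  List.eq_replicate_length.mpr fun b hb => List.eq_of_mem_replicate (h.subset hb)

theorem suffix_replicate {s : List α} {n : ℕ} {a : α} (h : s <:+ List.replicate n a) :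
    s = List.replicate s.length a :=
  List.eq_replicate_length.mpr fun b hb => List.eq_of_mem_replicate (h.subset hb)

theorem last_run_aux {y y' : List α} {a : α} {m m' : ℕ}
    (hy : y.getLast? ≠ some a)
    (he : y ++ List.replicate m a = y' ++ List.replicate m' a) (hmm : m ≤ m') : m = m' := by
  by_contra hne
  have h1 : List.replicate m' a = List.replicate (m' - m) a ++ List.replicate m a := by
    rw [← List.replicate_add]
    congr 1
    omega
  rw [h1, ← List.append_assoc] at he
  have h2 : y = y' ++ List.replicate (m' - m) a := List.append_cancel_right he
  have : y.getLast? = some a := by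
    rw [h2, List.getLast?_append, List.getLast?_replicate, if_neg (by omega)]
    rfl
  exact hy this

theorem last_run_unique {y y' : List α} {a a' : α} {m m' : ℕ} (hm : 1 ≤ m) (hm' : 1 ≤ m')
    (hy : y.getLast? ≠ some a) (hy' : y'.getLast? ≠ some a')
    (he : y ++ List.replicate m a = y' ++ List.replicate m' a') :
    a = a' ∧ m = m' ∧ y = y' := by
  have ha : a = a' := by
    have h1 := congrArg List.getLast? he
    rw [List.getLast?_append, List.getLast?_append, List.getLast?_replicate,
      List.getLast?_replicate, if_neg (by omega), if_neg (by omega)] at h1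
    simpa using h1
  subst ha
  have hmm : m = m' := by
    rcases le_total m m' with h | h
    · exact last_run_aux hy he h
    · exact (last_run_aux hy' he.symm h).symm
  subst hmm
  exact ⟨rfl, rfl, List.append_cancel_right he⟩

theorem prefix_runWord_decomp (c : ℕ → α) (l : ℕ → ℕ) :
    ∀ d k (p : List α), (∀ t, k ≤ t → t < k + d → 1 ≤ l t) →
      p <+: runWord c l k (k + d) → p ≠ [] →
      ∃ t m, k ≤ t ∧ t < k + d ∧ 1 ≤ m ∧ m ≤ l t ∧
        p = runWord c l k t ++ List.replicate m (c t) := by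
  intro d
  induction d with
  | zero =>
      intro k p _ hp hne
      rw [runWord_nil c l (by omega)] at hp
      exact absurd (List.prefix_nil.mp hp) hne
  | succ d ih =>
      intro k p hl hp hne
      rw [runWord_cons c l (by omega)] at hp
      rcases le_or_gt p.length (l k) with hlen | hlen
      · have hpX : p <+: List.replicate (l k) (c k) :=
          prefix_append_cases hp (by simpa using hlen)
        refine ⟨k, p.length, le_refl k, by omega, ?_, hlen, ?_⟩
        · have := List.length_pos_iff.2 hne; omega
        · rw [runWord_nil c l (le_refl k), List.nil_append]
          exact prefix_replicate hpX
      · obtain ⟨p', hp'e, hp'⟩ := prefix_append_split hp (by simp; omega)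
        have hne' : p' ≠ [] := by
          intro hn
          rw [hn, List.append_nil] at hp'e
          have := congrArg List.length hp'e
          simp at this
          omega
        rw [show k + (d + 1) = (k + 1) + d by omega] at hp'
        obtain ⟨t, m, ht1, ht2, hm1, hm2, hde⟩ :=
          ih (k + 1) p' (fun t h1 h2 => hl t (by omega) (by omega)) hp' hne'
        refine ⟨t, m, by omega, by omega, hm1, hm2, ?_⟩
        rw [hp'e, hde, runWord_cons c l (show k < t by omega), List.append_assoc]

theorem suffix_runWord_decomp (c : ℕ → α) (l : ℕ → ℕ) :
    ∀ d k (s : List α), (∀ t, k ≤ t → t < k + d → 1 ≤ l t) →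
      s <:+ runWord c l k (k + d) → s ≠ [] →
      ∃ t m, k ≤ t ∧ t < k + d ∧ 1 ≤ m ∧ m ≤ l t ∧
        s = List.replicate m (c t) ++ runWord c l (t + 1) (k + d) := by
  intro d
  induction d with
  | zero =>
      intro k s _ hs hne
      rw [runWord_nil c l (by omega)] at hs
      exact absurd (List.suffix_nil.mp hs) hne
  | succ d ih =>
      intro k s hl hs hne
      rw [show k + (d + 1) = (k + d) + 1 from rfl, runWord_succ c l (by omega)] at hs
      rcases le_or_gt s.length (l (k + d)) with hlen | hlen
      · refine ⟨k + d, s.length, by omega, by omega, ?_, hlen, ?_⟩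
        · have := List.length_pos_iff.2 hne; omega
        · rw [show k + (d + 1) = k + d + 1 from rfl,
            runWord_nil c l (le_refl (k + d + 1)), List.append_nil]
          exact suffix_replicate (suffix_append_cases hs (by simpa using hlen))
      · obtain ⟨s', hs'e, hs'⟩ := suffix_append_split hs (by simp; omega)
        have hne' : s' ≠ [] := by
          intro hn
          rw [hn, List.nil_append] at hs'e
          have := congrArg List.length hs'e
          simp at this
          omega
        obtain ⟨t, m, ht1, ht2, hm1, hm2, hde⟩ :=
          ih k s' (fun t h1 h2 => hl t (by omega) (by omega)) hs' hne'
        refine ⟨t, m, by omega, by omega, hm1, hm2, ?_⟩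
        rw [hs'e, hde, show k + (d + 1) = k + d + 1 from rfl,
          runWord_succ c l (show t + 1 ≤ k + d by omega), List.append_assoc]

theorem numRuns_runWord_rep [DecidableEq α] (c : ℕ → α) (l : ℕ → ℕ) :
    ∀ e k m, 1 ≤ m → (∀ u, k ≤ u → u < k + e → 1 ≤ l u) →
    (∀ u, k ≤ u → u + 1 ≤ k + e → c u ≠ c (u + 1)) →
    numRuns (runWord c l k (k + e) ++ List.replicate m (c (k + e))) = e + 1 := by
  intro e
  induction e with
  | zero =>
      intro k m hm _ _
      simp only [Nat.add_zero]
      rw [runWord_nil c l (le_refl k), List.nil_append, numRuns_replicate hm]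
  | succ e ih =>
      intro k m hm hl hc
      rw [show k + (e + 1) = (k + 1) + e by omega, runWord_cons c l (by omega),
        List.append_assoc]
      have hcons : ∃ x', runWord c l (k + 1) (k + 1 + e) ++ List.replicate m (c (k + 1 + e))
          = c (k + 1) :: x' := by
        cases e with
        | zero =>
            rw [runWord_nil c l (le_refl (k + 1)), List.nil_append]
            obtain ⟨n, rfl⟩ : ∃ n, m = n + 1 := ⟨m - 1, by omega⟩
            exact ⟨List.replicate n (c (k + 1)), by rw [List.replicate_succ]⟩
        | succ e' =>
            rw [runWord_cons c l (by omega), List.append_assoc]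
            exact replicate_append_cons (hl (k + 1) (by omega) (by omega)) _
      obtain ⟨x', hx'⟩ := hcons
      rw [numRuns_replicate_append (hl k (le_refl k) (by omega)) _ ?_]
      · rw [ih (k + 1) m hm (fun u h1 h2 => hl u (by omega) (by omega))
          (fun u h1 h2 => hc u (by omega) (by omega))]
        omega
      · intro b x'' hb
        rw [hx'] at hb
        injection hb with hb1 _
        rw [← hb1]
        exact (hc k (le_refl k) (by omega)).symm


theorem replicate_suffix_replicate {a : α} {n n' : ℕ} (h : n ≤ n') :
    List.replicate n a <:+ List.replicate n' a :=
  ⟨List.replicate (n' - n) a, by rw [← List.replicate_add]; congr 1; omega⟩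

theorem border_structure [DecidableEq α] {c : ℕ → α} {l : ℕ → ℕ} {k j : ℕ}
    (hkj2 : k + 2 ≤ j)
    (hlpos : ∀ t, k ≤ t → t ≤ j → 1 ≤ l t)
    (hcne : ∀ t, k ≤ t → t < j → c t ≠ c (t + 1))
    {b : List α} (hpre : b <+: runWord c l k j) (hsuf : b <:+ runWord c l k j)
    (hblen : b.length < (runWord c l k j).length)
    (hbmax : ∀ b', IsBorder b' (runWord c l k j) → b'.length ≤ b.length)
    (hz0 : ¬(0 < numRuns b ∧ l (j - 1) < l (k + numRuns b - 1))) :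
    b = runWord c l k (k + numRuns b) ∧ k + numRuns b < j := by
  rcases eq_or_ne b [] with rfl | hbne
  · rw [numRuns_nil]
    exact ⟨(runWord_nil c l (by omega)).symm, by omega⟩
  -- prefix decomposition
  obtain ⟨t, m, ht1, ht2, hm1, hm2, hbp⟩ := prefix_runWord_decomp c l (j - k) k b
    (fun u h1 _ => hlpos u h1 (by omega))
    (by rw [show k + (j - k) = j by omega]; exact hpre) hbne
  rw [show k + (j - k) = j by omega] at ht2
  -- suffix decomposition
  obtain ⟨t', m', ht1', ht2', hm1', hm2', hbs⟩ := suffix_runWord_decomp c l (j - k) k b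
    (fun u h1 _ => hlpos u h1 (by omega))
    (by rw [show k + (j - k) = j by omega]; exact hsuf) hbne
  rw [show k + (j - k) = j by omega] at ht2' hbs
  -- numRuns from both sides
  have hnr : numRuns b = t - k + 1 := by
    have := numRuns_runWord_rep c l (t - k) k m hm1
      (fun u h1 h2 => hlpos u h1 (by omega))
      (fun u h1 h2 => hcne u h1 (by omega))
    rw [show k + (t - k) = t by omega] at this
    rw [hbp, this]
  have hnr' : numRuns b = j - t' := by
    have := numRuns_rep_runWord c l (j - t' - 1) t' m' hm1'
      (fun u h1 h2 => hlpos u (by omega) (by omega))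
      (fun u h1 h2 => hcne u (by omega) (by omega))
    rw [show t' + 1 + (j - t' - 1) = j by omega] at this
    rw [hbs, this]
    omega
  have hlj1 : 1 ≤ l (j - 1) := hlpos (j - 1) (by omega) (by omega)
  rcases Nat.eq_or_lt_of_le ht1 with hkt | hkt
  · -- ℓ = 1, k = k
    subst hkt
    rw [runWord_nil c l (le_refl k), List.nil_append] at hbp
    have ht'j : t' = j - 1 := by omega
    subst ht'j
    rw [runWord_nil c l (by omega), List.append_nil] at hbs
    have hmm' : m = m' := by
      have h1 := congrArg List.length hbp
      have h2 := congrArg List.length hbs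
      simp at h1 h2
      omega
    have hct : c k = c (j - 1) := by
      have := hbp.symm.trans hbs
      rw [hmm'] at this
      have h2 := congrArg List.getLast? this
      rw [List.getLast?_replicate, List.getLast?_replicate, if_neg (by omega),
        if_neg (by omega)] at h2
      injection h2
    have hle : l k ≤ l (j - 1) := by
      have h0 : numRuns b = 1 := by omega
      rw [h0, show k + 1 - 1 = k from rfl] at hz0
      have := not_and.mp hz0 (by omega)
      omega
    -- candidate border of size l k
    have hcand : IsBorder (List.replicate (l k) (c k)) (runWord c l k j) := by
      refine ⟨?_, ?_, ?_⟩
      · rw [runWord_cons c l (by omega)]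
        exact List.prefix_append _ _
      · rw [show j = (j - 1) + 1 by omega, runWord_succ c l (by omega), hct]
        exact (replicate_suffix_replicate hle).trans (List.suffix_append _ _)
      · have hne2 := runWord_ne_nil c l (show k + 1 < j by omega)
          (hlpos (k + 1) (by omega) (by omega))
        rw [runWord_cons c l (by omega), List.length_append, List.length_replicate]
        have := List.length_pos_iff.2 hne2
        omega
    have hmax := hbmax _ hcand
    rw [hbp] at hmax
    simp only [List.length_replicate] at hmax
    have hmlt : m = l k := le_antisymm hm2 hmax
    constructor
    · have h0 : numRuns b = 1 := by omega
      rw [h0, hbp, hmlt,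
        runWord_cons c l (show k < k + 1 by omega), runWord_nil c l (le_refl (k + 1)),
        List.append_nil]
    · have h0 : numRuns b = 1 := by omega
      omega
  · -- ℓ ≥ 2, k < t
    have ht'lt : t' < j - 1 := by omega
    -- rewrite suffix form to expose last run
    have hbs2 : b = (List.replicate m' (c t') ++ runWord c l (t' + 1) (j - 1))
        ++ List.replicate (l (j - 1)) (c (j - 1)) := by
      rw [hbs, show j = (j - 1) + 1 by omega, runWord_succ c l (by omega),
        List.append_assoc]
      rw [show j - 1 + 1 - 1 = j - 1 by omega]
    have hy : (runWord c l k t).getLast? ≠ some (c t) := by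
      rw [runWord_getLast? c l hkt (hlpos (t - 1) (by omega) (by omega))]
      intro hcon
      injection hcon with hcon
      exact hcne (t - 1) (by omega) (by omega) (by rw [show t - 1 + 1 = t by omega]; exact hcon)
    have hy' : (List.replicate m' (c t') ++ runWord c l (t' + 1) (j - 1)).getLast?
        ≠ some (c (j - 1)) := by
      rw [rep_runWord_getLast? c l ht'lt hm1'
        (hlpos (j - 1 - 1) (by omega) (by omega))]
      intro hcon
      injection hcon with hcon
      exact hcne (j - 2) (by omega) (by omega)
        (by rw [show j - 2 + 1 = j - 1 by omega, show j - 1 - 1 = j - 2 by omega] at *; exact hcon)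
    obtain ⟨hca, hma, hya⟩ := last_run_unique hm1 hlj1 hy hy' (hbp.symm.trans hbs2)
    -- z = 0 gives m = l t
    have hml : m = l t := by
      rw [hnr] at hz0
      have := not_and.mp hz0 (by omega)
      rw [show k + (t - k + 1) - 1 = t by omega] at this
      omega
    have hblt : t + 1 ≤ j := by omega
    -- exclude t + 1 = j
    have htj : t + 1 < j := by
      rcases Nat.eq_or_lt_of_le hblt with he | h
      · exfalso
        have h1 := congrArg List.length hbp
        have hwlen : runWord c l k j = runWord c l k t ++ List.replicate (l (j-1)) (c (j-1)) := by
          rw [show j = t + 1 by omega, runWord_succ c l (by omega),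
            show t + 1 - 1 = t by omega]
        have h2 := congrArg List.length hwlen
        simp only [List.length_append, List.length_replicate] at h1 h2
        rw [hma] at h1
        omega
      · exact h
    constructor
    · rw [hnr, show k + (t - k + 1) = t + 1 by omega, runWord_succ c l (by omega),
        hbp, hml]
    · rw [hnr]
      omega
section Case2B
variable [LinearOrder α]

theorem case2b_lyndon {c : ℕ → α} {l : ℕ → ℕ} {k i j : ℕ} {b u : List α}
    (hki : k ≤ i) (hij2 : i + 1 < j)
    (hlpos : ∀ t, k ≤ t → t ≤ j → 1 ≤ l t)
    (hbI : b = runWord c l k i)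
    (hbsuf : b <:+ runWord c l k j)
    (hblen : b.length < (runWord c l k j).length)
    (hbmax : ∀ b', IsBorder b' (runWord c l k j) → b'.length ≤ b.length)
    (hV : IsLyndon (runWord c l k j ++ u))
    (hceq : c j = c i) (hgt : c (i + 1) < c j) (hlij : l i < l j) :
    IsLyndon (runWord c l k (j + 1)) := by
  have hlk : 1 ≤ l k := hlpos k (le_refl k) (by omega)
  have hli : 1 ≤ l i := hlpos i hki (by omega)
  have hli1 : 1 ≤ l (i + 1) := hlpos (i + 1) (by omega) (by omega)
  have hRi : runWord c l i j = List.replicate (l i) (c i)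
      ++ (c (i + 1) :: (List.replicate (l (i + 1) - 1) (c (i + 1)) ++ runWord c l (i + 2) j)) := by
    rw [runWord_cons c l (show i < j by omega), runWord_cons c l (show i + 1 < j by omega)]
    congr 1
    rw [← List.cons_append]
    congr 1
    rw [show l (i + 1) = (l (i + 1) - 1) + 1 by omega, List.replicate_succ]
    simp
  have hw : runWord c l k j = b ++ runWord c l i j := by
    rw [runWord_append c l hki (show i ≤ j by omega), hbI]
  have hlenw : b.length + l i + 1 ≤ (runWord c l k j).length := by
    have h2 := congrArg List.length hw
    rw [hRi] at h2
    simp only [List.length_append, List.length_replicate, List.length_cons] at h2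
    omega
  obtain ⟨w1, hw1⟩ : ∃ w1, runWord c l k j = c k :: w1 := by
    have h1 : runWord c l k j = List.replicate (l k) (c k) ++ runWord c l (k + 1) j :=
      runWord_cons c l (by omega)
    obtain ⟨x, hx⟩ := replicate_append_cons hlk (runWord c l (k + 1) j)
    exact ⟨x, h1.trans hx⟩
  have hckj : c k < c j := by
    have hsplit : runWord c l k j ++ u = runWord c l k (i + 1)
        ++ (List.replicate (l (i + 1)) (c (i + 1)) ++ (runWord c l (i + 2) j ++ u)) := by
      rw [runWord_append c l (show k ≤ i + 1 by omega) (show i + 1 ≤ j by omega),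
        runWord_cons c l (show i + 1 < j by omega)]
      simp [List.append_assoc]
    have hpos1 : 0 < (runWord c l k (i + 1)).length :=
      List.length_pos_iff.2 (runWord_ne_nil c l (by omega) hlk)
    have hposlt : (runWord c l k (i + 1)).length < (runWord c l k j ++ u).length := by
      have h3 := congrArg List.length hsplit
      simp only [List.length_append, List.length_replicate] at h3 ⊢
      omega
    have hm := lyndon_mlt_drop hV hpos1 hposlt
    have hdropeq : (runWord c l k j ++ u).drop (runWord c l k (i + 1)).length
        = List.replicate (l (i + 1)) (c (i + 1)) ++ (runWord c l (i + 2) j ++ u) := by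
      rw [hsplit, List.drop_left]
    rw [hdropeq] at hm
    obtain ⟨z1, hz1⟩ := replicate_append_cons hli1 (runWord c l (i + 2) j ++ u)
    rw [hz1, hw1, List.cons_append] at hm
    exact lt_of_le_of_lt (mlt_head_le hm) hgt
  -- main step: w ++ c_j^{l_i + 1} is Lyndon
  have hmain : IsLyndon (runWord c l k j ++ List.replicate (l i + 1) (c j)) := by
    apply lyndon_of_mlt_drops (by simp [hw1])
    intro p hp0 hplt
    rcases Nat.lt_or_ge p (runWord c l k j).length with hpw | hpw
    · -- p inside w
      have hdropW' : (runWord c l k j ++ List.replicate (l i + 1) (c j)).drop p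
          = (runWord c l k j).drop p ++ List.replicate (l i + 1) (c j) := by
        rw [List.drop_append, Nat.sub_eq_zero_of_le (le_of_lt hpw),
          List.drop_zero]
      have hdropV : (runWord c l k j ++ u).drop p = (runWord c l k j).drop p ++ u := by
        rw [List.drop_append, Nat.sub_eq_zero_of_le (le_of_lt hpw),
          List.drop_zero]
      have hslen : ((runWord c l k j).drop p).length = (runWord c l k j).length - p :=
        List.length_drop
      have hm := lyndon_mlt_drop hV hp0 (by rw [List.length_append]; omega)
      rw [hdropV] at hm
      rw [hdropW']
      obtain ⟨p0, a, bb, x', y', hab, hx, hy⟩ := hm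
      rcases Nat.lt_or_ge p0.length ((runWord c l k j).drop p).length with h1 | h1
      · obtain ⟨s2, hs2⟩ := locate_left hy h1
        obtain ⟨x2, hx2⟩ := locate_left hx (by omega)
        exact ⟨p0, a, bb, x2 ++ List.replicate (l i + 1) (c j),
          s2 ++ List.replicate (l i + 1) (c j), hab,
          by rw [hx2]; simp, by rw [hs2]; simp⟩
      · obtain ⟨p1, hp1, hyu⟩ := locate_right hy h1
        have hspre : (runWord c l k j).drop p <+: runWord c l k j := by
          apply prefix_append_cases (Y := u) _ (by omega)
          exact ⟨p1 ++ a :: x', by rw [← List.append_assoc, ← hp1, ← hx]⟩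
        have hsbord : ((runWord c l k j).drop p).length ≤ b.length :=
          hbmax _ ⟨hspre, List.drop_suffix _ _, by omega⟩
        rcases eq_or_lt_of_le hsbord with hsb | hsb
        · -- the border is b itself
          have hbpre : b <+: runWord c l k j := ⟨runWord c l i j, hw.symm⟩
          have hseq : (runWord c l k j).drop p = b :=
            (List.prefix_of_prefix_length_le hspre hbpre (by omega)).eq_of_length hsb
          rw [hseq]
          refine ⟨b ++ List.replicate (l i) (c i), c (i + 1), c j,
            (List.replicate (l (i + 1) - 1) (c (i + 1)) ++ runWord c l (i + 2) j)
              ++ List.replicate (l i + 1) (c j), [], hgt, ?_, ?_⟩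
          · conv_lhs => rw [hw, hRi]
            simp [List.append_assoc]
          · rw [List.replicate_succ', hceq]
            simp [List.append_assoc]
        · -- shorter border: second Lyndon application
          have hssufb : (runWord c l k j).drop p <:+ b :=
            List.suffix_of_suffix_length_le (List.drop_suffix _ _) hbsuf (le_of_lt hsb)
          have hdropb : b.drop (b.length - ((runWord c l k j).drop p).length)
              = (runWord c l k j).drop p := (List.suffix_iff_eq_drop.mp hssufb).symm
          have hq0pos : 0 < b.length - ((runWord c l k j).drop p).length := by omega
          have hdrop2 : (runWord c l k j ++ u).drop
                (b.length - ((runWord c l k j).drop p).length)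
              = (runWord c l k j).drop p ++ (runWord c l i j ++ u) := by
            have h5 : runWord c l k j ++ u = b ++ (runWord c l i j ++ u) := by
              rw [hw, List.append_assoc]
            rw [h5, List.drop_append,
              show b.length - ((runWord c l k j).drop p).length - b.length = 0 from by omega,
              List.drop_zero, hdropb]
          have hm2 := lyndon_mlt_drop hV hq0pos (by rw [List.length_append]; omega)
          rw [hdrop2] at hm2
          obtain ⟨p0', a', bb', x1, y1, hab', hx', hy'⟩ := hm2
          rw [hRi] at hy'
          simp only [List.append_assoc, List.cons_append] at hy'
          -- hy' : drop p w ++ (rep (l i) (c i) ++ c (i+1) :: (rep _ ++ (runWord _ ++ u))) = p0' ++ bb' :: y1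
          rcases Nat.lt_or_ge p0'.length ((runWord c l k j).drop p).length with hA | hA
          · -- Zone A : impossible
            obtain ⟨s2, hs2⟩ := locate_left hy' hA
            obtain ⟨srest, hsrest⟩ := hspre
            have heq2 : runWord c l k j ++ u = p0' ++ bb' :: (s2 ++ (srest ++ u)) := by
              conv_lhs => rw [← hsrest]
              rw [hs2]
              simp [List.append_assoc]
            have hae := (append_cons_inj (hx'.symm.trans heq2)).1
            exact absurd hab' (by rw [hae]; exact lt_irrefl _)
          · obtain ⟨p1', hp1', hy2⟩ := locate_right hy' hA
            rcases Nat.lt_or_ge p1'.length (l i) with hB | hB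
            · -- Zone B
              obtain ⟨r2, hr2⟩ := locate_left hy2
                (by rw [List.length_replicate]; exact hB)
              have hbb : bb' = c i := List.eq_of_mem_replicate
                (by rw [hr2]; exact List.mem_append_right _ (List.mem_cons_self))
              obtain ⟨n, hn⟩ : ∃ n, p1' = List.replicate n (c i) :=
                ⟨p1'.length, prefix_replicate ⟨bb' :: r2, hr2.symm⟩⟩
              subst hn
              rw [List.length_replicate] at hB
              have hp0len : p0'.length = ((runWord c l k j).drop p).length + n := by
                rw [hp1']; simp
              obtain ⟨x2, hx2⟩ := locate_left hx' (by omega)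
              refine ⟨p0', a', c j, x2 ++ List.replicate (l i + 1) (c j),
                List.replicate (l i - n) (c j),
                lt_of_lt_of_eq hab' (by rw [hbb, ← hceq]), ?_, ?_⟩
              · rw [hx2]; simp
              · rw [hp1', hceq, List.append_assoc]
                congr 1
                rw [show (c i) :: List.replicate (l i - n) (c i)
                    = List.replicate (l i - n + 1) (c i) from (List.replicate_succ).symm,
                  ← List.replicate_add]
                congr 1
                omega
            · -- Zone C
              obtain ⟨p2', hp2', hy3⟩ := locate_right hy2
                (by rw [List.length_replicate]; exact hB)
              cases p2' with
              | nil =>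
                  rw [List.nil_append] at hy3
                  have hbb : bb' = c (i + 1) := by
                    injection hy3 with h4 _
                    exact h4.symm
                  have hp0e : p0' = (runWord c l k j).drop p ++ List.replicate (l i) (c i) := by
                    rw [hp1', hp2', List.append_nil]
                  obtain ⟨x2, hx2⟩ := locate_left hx'
                    (by rw [hp0e]; simp only [List.length_append, List.length_replicate]; omega)
                  refine ⟨p0', a', c j, x2 ++ List.replicate (l i + 1) (c j), [],
                    lt_trans (by rw [← hbb]; exact hab') hgt, ?_, ?_⟩
                  · rw [hx2]; simp
                  · rw [hp0e, List.replicate_succ', hceq]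
                    simp [List.append_assoc]
              | cons γ p3' =>
                  have hy4 : c (i + 1) = γ ∧ γ :: (p3' ++ bb' :: y1)
                      = γ :: (p3' ++ bb' :: y1) := by
                    rw [List.cons_append] at hy3
                    injection hy3 with h4 _
                    exact ⟨h4, rfl⟩
                  have hx'2 : runWord c l k j ++ u
                      = ((runWord c l k j).drop p ++ List.replicate (l i) (c i))
                        ++ c (i + 1) :: (p3' ++ a' :: x1) := by
                    rw [hx', hp1', hp2', ← hy4.1]
                    simp [List.append_assoc]
                  obtain ⟨x3, hx3⟩ := locate_left hx'2
                    (by simp only [List.length_append, List.length_replicate]; omega)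
                  refine ⟨(runWord c l k j).drop p ++ List.replicate (l i) (c i),
                    c (i + 1), c j, x3 ++ List.replicate (l i + 1) (c j), [], hgt, ?_, ?_⟩
                  · conv_lhs => rw [hx3]
                    simp [List.append_assoc]
                  · rw [List.replicate_succ', hceq]
                    simp [List.append_assoc]
    · -- p inside the replicate tail
      have hdropW' : (runWord c l k j ++ List.replicate (l i + 1) (c j)).drop p
          = List.replicate (l i + 1 - (p - (runWord c l k j).length)) (c j) := by
        rw [List.drop_append, List.drop_eq_nil_of_le hpw, List.nil_append,
          List.drop_replicate]
      rw [hdropW']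
      have hrpos : 1 ≤ l i + 1 - (p - (runWord c l k j).length) := by
        rw [List.length_append, List.length_replicate] at hplt
        omega
      obtain ⟨n2, hn2⟩ : ∃ n2, l i + 1 - (p - (runWord c l k j).length) = n2 + 1 :=
        ⟨l i - (p - (runWord c l k j).length), by omega⟩
      refine ⟨[], c k, c j, w1 ++ List.replicate (l i + 1) (c j), List.replicate n2 (c j),
        hckj, by rw [hw1]; simp, ?_⟩
      rw [hn2, List.replicate_succ, List.nil_append]
  -- extend by the remaining c_j's
  have hTW : runWord c l k (j + 1)
      = (runWord c l k j ++ List.replicate (l i + 1) (c j))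
        ++ List.replicate (l j - (l i + 1)) (c j) := by
    rw [runWord_succ c l (show k ≤ j by omega), List.append_assoc, ← List.replicate_add]
    congr 2
    omega
  obtain ⟨w2, hw2⟩ : ∃ w2, runWord c l k j ++ List.replicate (l i + 1) (c j) = c k :: w2 :=
    ⟨w1 ++ List.replicate (l i + 1) (c j), by rw [hw1]; simp⟩
  rw [hTW, hw2]
  rw [hw2] at hmain
  exact lyndon_append_replicate hmain hckj _

end Case2B


/-- Under the run invariant, if `z = 0`, `c_j = c_i` and `l_j > l_i`, then
`c_j ≠ c_{i+1}` and: either `c_j < c_{i+1}` and the extended word is not in `P'`,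
or `c_j > c_{i+1}` and the extended word is in `L'` with empty longest border. -/
theorem rle_next_case4 [LinearOrder α] (c : ℕ → α) (l : ℕ → ℕ) (k j : ℕ) (hkj : k < j)
    (hlpos : ∀ t, k ≤ t → t ≤ j → 1 ≤ l t)
    (hcne : ∀ t, k ≤ t → t < j → c t ≠ c (t + 1))
    (hP' : InP' (runWord c l k j))
    (b : List α) (hb : IsBorder b (runWord c l k j))
    (hbmax : ∀ b' : List α, IsBorder b' (runWord c l k j) → b'.length ≤ b.length)
    (ℓ i z s : ℕ)
    (hℓ : ℓ = if 1 < j - k then numRuns b else 0)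
    (hi : i = k + ℓ)
    (hz : z = if 0 < ℓ ∧ l (j - 1) < l (i - 1) then 1 else 0)
    (hs : s = i - z)
    (hz0 : z = 0) (hceq : c j = c i) (hgt : l i < l j) :
    c j ≠ c (i + 1) ∧
      ((c j < c (i + 1) ∧ ¬ InP' (runWord c l k (j + 1))) ∨
       (c (i + 1) < c j ∧ IsLR (runWord c l k (j + 1)) ∧
         ∀ b' : List α, IsBorder b' (runWord c l k (j + 1)) → b' = [])) := by

  obtain ⟨hbpre, hbsuf, hblen⟩ := hb
  have hkj2 : k + 2 ≤ j := by
    by_contra hcon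
    have hjeq : j = k + 1 := by omega
    have hl0 : ℓ = 0 := by rw [hℓ, if_neg (by omega)]
    have h2 : c (k + 1) = c k := by
      rw [← hjeq, hceq, hi, hl0, Nat.add_zero]
    exact hcne k (le_refl k) hkj h2.symm
  have hℓn : ℓ = numRuns b := by rw [hℓ, if_pos (by omega)]
  have hzc : ¬(0 < numRuns b ∧ l (j - 1) < l (k + numRuns b - 1)) := by
    intro hcon
    have h1 : 0 < ℓ ∧ l (j - 1) < l (i - 1) := by
      constructor
      · rw [hℓn]; exact hcon.1
      · rw [hi, hℓn]; exact hcon.2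
    rw [hz, if_pos h1] at hz0
    exact one_ne_zero hz0
  obtain ⟨hbst, hij⟩ := border_structure hkj2 hlpos hcne hbpre hbsuf hblen hbmax hzc
  rw [← hℓn, ← hi] at hbst hij
  have hcii : c i ≠ c (i + 1) := hcne i (by omega) hij
  have hcji : c j ≠ c (i + 1) := by rw [hceq]; exact hcii
  have hij2 : i + 1 < j := by
    rcases Nat.lt_or_ge (i + 1) j with h | h
    · exact h
    · exfalso
      apply hcji
      rw [show i + 1 = j by omega]
  have hli : 1 ≤ l i := hlpos i (by omega) (by omega)
  have hli1 : 1 ≤ l (i + 1) := hlpos (i + 1) (by omega) (by omega)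
  have hRi : runWord c l i j = List.replicate (l i) (c i)
      ++ (c (i + 1) :: (List.replicate (l (i + 1) - 1) (c (i + 1)) ++ runWord c l (i + 2) j)) := by
    rw [runWord_cons c l (show i < j by omega), runWord_cons c l (show i + 1 < j by omega)]
    congr 1
    rw [← List.cons_append]
    congr 1
    rw [show l (i + 1) = (l (i + 1) - 1) + 1 by omega, List.replicate_succ]
    simp
  have hw : runWord c l k j = b ++ runWord c l i j := by
    rw [runWord_append c l (show k ≤ i by omega) (show i ≤ j by omega), hbst]
  have hW : runWord c l k (j + 1) = runWord c l k j ++ List.replicate (l j) (c j) :=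
    runWord_succ c l (by omega)
  refine ⟨hcji, ?_⟩
  rcases lt_or_gt_of_ne hcji with hlt | hgt2
  · -- case c j < c (i+1): not in P'
    left
    refine ⟨hlt, ?_⟩
    intro hP
    rcases hP with ⟨hWne, u', hV⟩ | ⟨cc, K, hK2, hmaxc, hrep⟩
    · have hq0pos : 0 < (runWord c l k j).length - b.length := by omega
      have hdw : (runWord c l k j).drop ((runWord c l k j).length - b.length) = b :=
        (List.suffix_iff_eq_drop.mp hbsuf).symm
      have hVe : runWord c l k (j + 1) ++ u'
          = runWord c l k j ++ (List.replicate (l j) (c j) ++ u') := by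
        rw [hW, List.append_assoc]
      have hdropV : (runWord c l k (j + 1) ++ u').drop ((runWord c l k j).length - b.length)
          = b ++ (List.replicate (l j) (c j) ++ u') := by
        rw [hVe, List.drop_append,
          show (runWord c l k j).length - b.length - (runWord c l k j).length = 0
            from by omega,
          List.drop_zero, hdw]
      have hWlen : (runWord c l k (j + 1)).length
          = (runWord c l k j).length + l j := by
        rw [hW, List.length_append, List.length_replicate]
      have hm1 := lyndon_mlt_drop hV hq0pos
        (by rw [List.length_append]; omega)
      rw [hdropV] at hm1
      have hrep_split : List.replicate (l j) (c j)
          = List.replicate (l i) (c i) ++ (c j :: List.replicate (l j - (l i + 1)) (c j)) := by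
        rw [hceq]
        rw [show (c i) :: List.replicate (l j - (l i + 1)) (c i)
            = List.replicate (l j - (l i + 1) + 1) (c i) from (List.replicate_succ).symm,
          ← List.replicate_add]
        congr 1
        omega
      have hm2 : Mlt (b ++ (List.replicate (l j) (c j) ++ u')) (runWord c l k (j + 1) ++ u') := by
        refine ⟨b ++ List.replicate (l i) (c i), c j, c (i + 1),
          List.replicate (l j - (l i + 1)) (c j) ++ u',
          (List.replicate (l (i + 1) - 1) (c (i + 1)) ++ runWord c l (i + 2) j)
            ++ (List.replicate (l j) (c j) ++ u'), hlt, ?_, ?_⟩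
        · conv_lhs => rw [hrep_split]
          simp [List.append_assoc]
        · rw [hVe, hw, hRi]
          simp [List.append_assoc]
      exact mlt_asymm hm1 hm2
    · have hmem1 : c i ∈ runWord c l k (j + 1) := by
        rw [hW, hw, hRi]
        refine List.mem_append_left _ (List.mem_append_right _ (List.mem_append_left _ ?_))
        rw [List.mem_replicate]
        exact ⟨by omega, rfl⟩
      have hmem2 : c (i + 1) ∈ runWord c l k (j + 1) := by
        rw [hW, hw, hRi]
        exact List.mem_append_left _ (List.mem_append_right _
          (List.mem_append_right _ (List.mem_cons_self)))
      rw [hrep] at hmem1 hmem2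
      exact hcii ((List.eq_of_mem_replicate hmem1).trans
        (List.eq_of_mem_replicate hmem2).symm)
  · -- case c (i+1) < c j : Lyndon
    right
    have hInP : InP (runWord c l k j) := by
      rcases hP' with h | ⟨cc, K, hK2, hmaxc, hrep⟩
      · exact h
      · exfalso
        have hmem1 : c k ∈ runWord c l k j := by
          rw [runWord_cons c l (show k < j by omega)]
          have : c k ∈ List.replicate (l k) (c k) := by
            rw [List.mem_replicate]
            exact ⟨by have := hlpos k (le_refl k) (by omega); omega, rfl⟩
          exact List.mem_append_left _ this
        have hmem2 : c (k + 1) ∈ runWord c l k j := by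
          rw [runWord_cons c l (show k < j by omega),
            runWord_cons c l (show k + 1 < j by omega)]
          have : c (k + 1) ∈ List.replicate (l (k + 1)) (c (k + 1)) := by
            rw [List.mem_replicate]
            exact ⟨by have := hlpos (k + 1) (by omega) (by omega); omega, rfl⟩
          exact List.mem_append_right _ (List.mem_append_left _ this)
        rw [hrep] at hmem1 hmem2
        exact hcne k (le_refl k) (by omega)
          ((List.eq_of_mem_replicate hmem1).trans (List.eq_of_mem_replicate hmem2).symm)
    obtain ⟨hwne, u, hV⟩ := hInP
    have hlynW := case2b_lyndon (show k ≤ i by omega) hij2 hlpos hbst hbsuf hblen hbmax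
      hV hceq hgt2 hgt
    refine ⟨hgt2, Or.inl hlynW, ?_⟩
    intro b' hb'
    exact lyndon_border_eq_nil hlynW hb'.1 hb'.2.1 hb'.2.2
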